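/- Assume (1 − δ⋆)·S̃ ≼ S ≼ S̃ for some δ⋆ with 0 < δ⋆ ≤ 1/(4κ) where κ = L/μ, let 0 < α⋆ ≤ 1/L, let u⋆ ∈ ker B satisfy ⟨∇f(u⋆), v⟩ = 0 for all v ∈ ker B, and let u⋆φ ∈ V satisfy u⋆φ = P̃(u⋆φ − α⋆ M⁻¹ ∇f(u⋆φ)). Then: (i) ‖u⋆φ − u⋆‖_M ≤ 3·√κ·μ^{−1/2}·δ⋆·√α⋆·‖∇f(u⋆)‖_{M⁻¹}; (ii) ‖∇f(u⋆φ) − ∇f(u⋆)‖_{M⁻¹} ≤ 3·√L·κ·δ⋆·√α⋆·‖∇f(u⋆)‖_{M⁻¹}; and (iii) ‖∇f(u⋆φ)‖_{M⁻¹} ≤ 2·‖∇f(u⋆)‖_{M⁻¹}. -/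

import Mathlib

open scoped RealInnerProductSpace

noncomputable section

/-- Loewner order: `X ≼ Y` iff `Y - X` is positive semidefinite. -/
def LoewnerLE {E : Type*} [NormedAddCommGroup E] [InnerProductSpace ℝ E]
    (X Y : E →ₗ[ℝ] E) : Prop :=
  ∀ u : E, ⟪u, X u⟫ ≤ ⟪u, Y u⟫

/-- The `A`-norm `‖u‖_A = ⟪u, A u⟫ ^ (1/2)`. -/
def anorm {E : Type*} [NormedAddCommGroup E] [InnerProductSpace ℝ E]
    (A : E →ₗ[ℝ] E) (u : E) : ℝ :=
  Real.sqrt ⟪u, A u⟫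

lemma cs_psd {E : Type*} [NormedAddCommGroup E] [InnerProductSpace ℝ E]
    (A : E →ₗ[ℝ] E) (hsym : ∀ u v : E, ⟪A u, v⟫ = ⟪u, A v⟫) (hpsd : ∀ u : E, 0 ≤ ⟪u, A u⟫)
    (u v : E) : ⟪u, A v⟫ ^ 2 ≤ ⟪u, A u⟫ * ⟪v, A v⟫ := by
  have key : ∀ t : ℝ, 0 ≤ ⟪v, A v⟫ * (t * t) + (2 * ⟪u, A v⟫) * t + ⟪u, A u⟫ := by
    intro t
    have h0 := hpsd (u + t • v)
    have hvu : ⟪v, A u⟫ = ⟪u, A v⟫ := by rw [← hsym]; exact real_inner_comm _ _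
    have expand : ⟪u + t • v, A (u + t • v)⟫
        = ⟪v, A v⟫ * (t * t) + (2 * ⟪u, A v⟫) * t + ⟪u, A u⟫ := by
      simp only [map_add, map_smul, inner_add_left, inner_add_right,
        real_inner_smul_left, real_inner_smul_right, hvu]
      ring
    linarith [expand ▸ h0]
  have hd := discrim_le_zero key
  simp only [discrim] at hd
  nlinarith [hd]

lemma inv_mono {E : Type*} [NormedAddCommGroup E] [InnerProductSpace ℝ E]
    (A Bm Ai Bi : E →ₗ[ℝ] E)
    (hAsym : ∀ u v : E, ⟪A u, v⟫ = ⟪u, A v⟫)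
    (hApsd : ∀ u : E, 0 ≤ ⟪u, A u⟫)
    (hBpsd : ∀ u : E, 0 ≤ ⟪u, Bm u⟫)
    (hle : ∀ u : E, ⟪u, A u⟫ ≤ ⟪u, Bm u⟫)
    (hAAi : ∀ u : E, A (Ai u) = u) (hBBi : ∀ u : E, Bm (Bi u) = u)
    (z : E) : ⟪z, Bi z⟫ ≤ ⟪z, Ai z⟫ := by
  set t : ℝ := ⟪z, Bi z⟫ with ht
  set s : ℝ := ⟪z, Ai z⟫ with hs
  have h1 : ⟪Bi z, A (Ai z)⟫ = t := by rw [hAAi, real_inner_comm]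
  have hcs := cs_psd A hAsym hApsd (Bi z) (Ai z)
  rw [h1] at hcs
  have h2 : ⟪Bi z, A (Bi z)⟫ ≤ t := by
    have := hle (Bi z)
    have h3 : ⟪Bi z, Bm (Bi z)⟫ = t := by rw [hBBi, real_inner_comm]
    linarith
  have h4 : ⟪Ai z, A (Ai z)⟫ = s := by rw [hAAi, real_inner_comm]
  rw [h4] at hcs
  have htn : 0 ≤ t := by
    have := hBpsd (Bi z); rw [hBBi] at this
    calc (0:ℝ) ≤ ⟪Bi z, Bm (Bi z)⟫ := hBpsd (Bi z)
    _ = t := by rw [hBBi, real_inner_comm]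
  have hsn : 0 ≤ s := by rw [← h4]; exact hApsd (Ai z)
  have hABi : 0 ≤ ⟪Bi z, A (Bi z)⟫ := hApsd (Bi z)
  rcases eq_or_lt_of_le htn with h | h
  · linarith
  · nlinarith
set_option maxHeartbeats 2000000

theorem stmt12 {V W : Type*}
    [NormedAddCommGroup V] [InnerProductSpace ℝ V] [FiniteDimensional ℝ V]
    [NormedAddCommGroup W] [InnerProductSpace ℝ W] [FiniteDimensional ℝ W]
    (M Minv : V →ₗ[ℝ] V) (hMsym : M.IsSymmetric)
    (hMpos : ∀ u : V, u ≠ 0 → 0 < ⟪u, M u⟫)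
    (hMinv : Minv ∘ₗ M = LinearMap.id) (hMinv' : M ∘ₗ Minv = LinearMap.id)
    (B : V →ₗ[ℝ] W) (hB : Function.Surjective B)
    (S Sinv : W →ₗ[ℝ] W) (hS : S = B ∘ₗ Minv ∘ₗ LinearMap.adjoint B)
    (hSinv : Sinv ∘ₗ S = LinearMap.id) (hSinv' : S ∘ₗ Sinv = LinearMap.id)
    (St Stinv : W →ₗ[ℝ] W) (hStsym : St.IsSymmetric)
    (hStpos : ∀ w : W, w ≠ 0 → 0 < ⟪w, St w⟫)
    (hStinv : Stinv ∘ₗ St = LinearMap.id) (hStinv' : St ∘ₗ Stinv = LinearMap.id)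
    (PM Pt : V →ₗ[ℝ] V)
    (hPM : PM = LinearMap.id - Minv ∘ₗ LinearMap.adjoint B ∘ₗ Sinv ∘ₗ B)
    (hPt : Pt = LinearMap.id - Minv ∘ₗ LinearMap.adjoint B ∘ₗ Stinv ∘ₗ B)
    (f : V → ℝ) (gradf : V → V) (hf : ∀ x : V, HasGradientAt f (gradf x) x)
    (μ L : ℝ) (hμ : 0 < μ) (hμL : μ ≤ L)
    (hlow : ∀ u v : V, μ / 2 * ⟪u - v, M (u - v)⟫ ≤ f u - f v - ⟪gradf v, u - v⟫)
    (hupp : ∀ u v : V, f u - f v - ⟪gradf v, u - v⟫ ≤ L / 2 * ⟪u - v, M (u - v)⟫)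
    (δstar : ℝ) (hδ0 : 0 < δstar) (hδκ : δstar ≤ 1 / (4 * (L / μ)))
    (h₁ : LoewnerLE ((1 - δstar) • St) S) (h₂ : LoewnerLE S St)
    (αstar : ℝ) (hα0 : 0 < αstar) (hαL : αstar ≤ 1 / L)
    (ustar : V) (hustar : B ustar = 0)
    (hopt : ∀ v : V, B v = 0 → ⟪gradf ustar, v⟫ = 0)
    (uphi : V) (hfix : uphi = Pt (uphi - αstar • Minv (gradf uphi)))
 :
    anorm M (uphi - ustar) ≤
        3 * Real.sqrt (L / μ) * (Real.sqrt μ)⁻¹ * δstar * Real.sqrt αstar *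
          anorm Minv (gradf ustar) ∧
      anorm Minv (gradf uphi - gradf ustar) ≤
        3 * Real.sqrt L * (L / μ) * δstar * Real.sqrt αstar *
          anorm Minv (gradf ustar) ∧
      anorm Minv (gradf uphi) ≤ 2 * anorm Minv (gradf ustar) := by
  -- basic constants
  have hL : 0 < L := lt_of_lt_of_le hμ hμL
  have hκ : 1 ≤ L / μ := (one_le_div hμ).mpr hμL
  have hδ14 : δstar ≤ 1/4 := by
    have h4 : (1:ℝ) / (4 * (L/μ)) ≤ 1/4 := by
      rw [div_le_div_iff₀ (by nlinarith) (by norm_num)]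
      nlinarith
    linarith
  have hδ1 : (0:ℝ) < 1 - δstar := by linarith
  -- inverse identities as functions
  have hMi' : ∀ u : V, M (Minv u) = u := fun u => by
    simpa using LinearMap.congr_fun hMinv' u
  have hSi : ∀ w : W, Sinv (S w) = w := fun w => by
    simpa using LinearMap.congr_fun hSinv w
  have hSi' : ∀ w : W, S (Sinv w) = w := fun w => by
    simpa using LinearMap.congr_fun hSinv' w
  have hSti' : ∀ w : W, St (Stinv w) = w := fun w => by
    simpa using LinearMap.congr_fun hStinv' w
  -- symmetry and positivity
  have hMsym' : ∀ u v : V, ⟪M u, v⟫ = ⟪u, M v⟫ := fun u v => hMsym u v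
  have hMpsd : ∀ u : V, 0 ≤ ⟪u, M u⟫ := by
    intro u; by_cases h : u = 0
    · simp [h]
    · exact le_of_lt (hMpos u h)
  have hMisym : ∀ u v : V, ⟪Minv u, v⟫ = ⟪u, Minv v⟫ := by
    intro u v
    calc ⟪Minv u, v⟫ = ⟪Minv u, M (Minv v)⟫ := by rw [hMi']
    _ = ⟪M (Minv u), Minv v⟫ := (hMsym' _ _).symm
    _ = ⟪u, Minv v⟫ := by rw [hMi']
  have hMipsd : ∀ u : V, 0 ≤ ⟪u, Minv u⟫ := by
    intro u
    calc (0:ℝ) ≤ ⟪Minv u, M (Minv u)⟫ := hMpsd _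
    _ = ⟪M (Minv u), Minv u⟫ := real_inner_comm _ _
    _ = ⟪u, Minv u⟫ := by rw [hMi']
  have hStpsd : ∀ w : W, 0 ≤ ⟪w, St w⟫ := by
    intro w; by_cases h : w = 0
    · simp [h]
    · exact le_of_lt (hStpos w h)
  have hStsym' : ∀ u v : W, ⟪St u, v⟫ = ⟪u, St v⟫ := fun u v => hStsym u v
  have hStisym : ∀ u v : W, ⟪Stinv u, v⟫ = ⟪u, Stinv v⟫ := by
    intro u v
    calc ⟪Stinv u, v⟫ = ⟪Stinv u, St (Stinv v)⟫ := by rw [hSti']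
    _ = ⟪St (Stinv u), Stinv v⟫ := (hStsym' _ _).symm
    _ = ⟪u, Stinv v⟫ := by rw [hSti']
  have hStipsd : ∀ w : W, 0 ≤ ⟪w, Stinv w⟫ := by
    intro w
    calc (0:ℝ) ≤ ⟪Stinv w, St (Stinv w)⟫ := hStpsd _
    _ = ⟪St (Stinv w), Stinv w⟫ := real_inner_comm _ _
    _ = ⟪w, Stinv w⟫ := by rw [hSti']
  have hSapp : ∀ w : W, S w = B (Minv (LinearMap.adjoint B w)) := by
    intro w; rw [hS]; rfl
  have hSsym' : ∀ u v : W, ⟪S u, v⟫ = ⟪u, S v⟫ := by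
    intro u v
    rw [hSapp, hSapp]
    calc ⟪B (Minv (LinearMap.adjoint B u)), v⟫
        = ⟪Minv (LinearMap.adjoint B u), LinearMap.adjoint B v⟫ :=
          (LinearMap.adjoint_inner_right B _ _).symm
    _ = ⟪LinearMap.adjoint B u, Minv (LinearMap.adjoint B v)⟫ := hMisym _ _
    _ = ⟪u, B (Minv (LinearMap.adjoint B v))⟫ := LinearMap.adjoint_inner_left B _ u
  have hSpsd : ∀ w : W, 0 ≤ ⟪w, S w⟫ := by
    intro w
    have h1 : ⟪w, S w⟫ = ⟪Minv (LinearMap.adjoint B w), LinearMap.adjoint B w⟫ := by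
      rw [hSapp, real_inner_comm, LinearMap.adjoint_inner_right]
    rw [h1, real_inner_comm]
    exact hMipsd _
  have hSisym : ∀ u v : W, ⟪Sinv u, v⟫ = ⟪u, Sinv v⟫ := by
    intro u v
    calc ⟪Sinv u, v⟫ = ⟪Sinv u, S (Sinv v)⟫ := by rw [hSi']
    _ = ⟪S (Sinv u), Sinv v⟫ := (hSsym' _ _).symm
    _ = ⟪u, Sinv v⟫ := by rw [hSi']
  have hSipsd : ∀ w : W, 0 ≤ ⟪w, Sinv w⟫ := by
    intro w
    calc (0:ℝ) ≤ ⟪Sinv w, S (Sinv w)⟫ := hSpsd _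
    _ = ⟪S (Sinv w), Sinv w⟫ := real_inner_comm _ _
    _ = ⟪w, Sinv w⟫ := by rw [hSi']
  -- fixed point algebra
  set g : V := gradf uphi with hg
  set gs : V := gradf ustar with hgs
  set z : V := uphi - αstar • Minv g with hz
  set y : W := Stinv (B z) with hy
  have hfix' : uphi = z - Minv (LinearMap.adjoint B y) := by
    rw [hfix, hPt]
    simp only [LinearMap.sub_apply, LinearMap.id_apply, LinearMap.comp_apply]
    rfl
  have key0 : αstar • Minv g = -(Minv (LinearMap.adjoint B y)) := by
    have h4 : uphi - (αstar • Minv g + Minv (LinearMap.adjoint B y)) = uphi := by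
      rw [← sub_sub]; exact hfix'.symm
    have h5 := sub_eq_self.mp h4
    exact eq_neg_of_add_eq_zero_left h5
  have key1 : αstar • g = -(LinearMap.adjoint B y) := by
    have := congrArg M key0
    simpa [map_smul, map_neg, hMi'] using this
  have key2 : S y = -(αstar • B (Minv g)) := by
    have hBty : LinearMap.adjoint B y = -(αstar • g) := by
      rw [key1, neg_neg]
    rw [hSapp, hBty]
    simp [map_neg, map_smul]
  have key3 : B uphi = St y - S y := by
    have h7 : uphi = z + αstar • Minv g := by rw [hz]; abel
    have hBz : St y = B z := by rw [hy, hSti']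
    calc B uphi = B z + αstar • B (Minv g) := by
          rw [h7]; simp [map_add, map_smul]
    _ = St y - S y := by rw [hBz, key2]; abel
  -- the approximate-projection error estimate on W
  have t1 : ⟪B uphi, Sinv (B uphi)⟫ ≤ (1 - δstar)⁻¹ * ⟪B uphi, Stinv (B uphi)⟫ := by
    have := inv_mono ((1 - δstar) • St) S ((1 - δstar)⁻¹ • Stinv) Sinv
      (by intro u v
          simp only [LinearMap.smul_apply]
          rw [real_inner_smul_left, real_inner_smul_right, hStsym' u v])
      (by intro u
          simp only [LinearMap.smul_apply]
          rw [real_inner_smul_right]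
          exact mul_nonneg (by linarith) (hStpsd u))
      hSpsd h₁
      (by intro u
          simp only [LinearMap.smul_apply, map_smul, hSti', smul_smul]
          rw [inv_mul_cancel₀ (ne_of_gt hδ1), one_smul])
      hSi' (B uphi)
    calc ⟪B uphi, Sinv (B uphi)⟫ ≤ ⟪B uphi, ((1 - δstar)⁻¹ • Stinv) (B uphi)⟫ := this
    _ = (1 - δstar)⁻¹ * ⟪B uphi, Stinv (B uphi)⟫ := by
        simp only [LinearMap.smul_apply]; rw [real_inner_smul_right]
  have hEsym : ∀ u v : W, ⟪(St - S) u, v⟫ = ⟪u, (St - S) v⟫ := by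
    intro u v
    simp only [LinearMap.sub_apply, inner_sub_left, inner_sub_right, hStsym' u v, hSsym' u v]
  have hEpsd : ∀ u : W, 0 ≤ ⟪u, (St - S) u⟫ := by
    intro u
    have := h₂ u
    simp only [LinearMap.sub_apply, inner_sub_right]
    linarith
  have hEle : ∀ u : W, ⟪u, (St - S) u⟫ ≤ δstar * ⟪u, St u⟫ := by
    intro u
    have := h₁ u
    simp only [LinearMap.smul_apply, real_inner_smul_right] at this
    simp only [LinearMap.sub_apply, inner_sub_right]
    nlinarith
  have t2 : ⟪B uphi, Stinv (B uphi)⟫ ≤ δstar * ⟪y, (St - S) y⟫ := by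
    have hBE : B uphi = (St - S) y := by rw [key3]; simp [LinearMap.sub_apply]
    set t : ℝ := ⟪B uphi, Stinv (B uphi)⟫ with hT
    have ht0 : 0 ≤ t := hStipsd _
    have hyE : 0 ≤ ⟪y, (St - S) y⟫ := hEpsd y
    have hcs := cs_psd (St - S) hEsym hEpsd (Stinv ((St - S) y)) y
    have hw1 : ⟪Stinv ((St - S) y), (St - S) y⟫ = t := by
      rw [hT, hBE, real_inner_comm]
    have hw2 : ⟪Stinv ((St - S) y), (St - S) (Stinv ((St - S) y))⟫ ≤ δstar * t := by
      have := hEle (Stinv ((St - S) y))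
      have hstw : ⟪Stinv ((St - S) y), St (Stinv ((St - S) y))⟫ = t := by
        rw [hSti', hw1]
      rw [hstw] at this
      exact this
    rw [hw1] at hcs
    have hδ0' : (0:ℝ) ≤ δstar := le_of_lt hδ0
    rcases eq_or_lt_of_le ht0 with h | h
    · rw [hT] at h ⊢
      rw [← h]
      exact mul_nonneg hδ0' hyE
    · have hEw : 0 ≤ ⟪Stinv ((St - S) y), (St - S) (Stinv ((St - S) y))⟫ := hEpsd _
      nlinarith
  have t3 : ⟪y, (St - S) y⟫ ≤ δstar * ((1 - δstar)⁻¹ * ⟪y, S y⟫) := by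
    have h1y := h₁ y
    simp only [LinearMap.smul_apply, real_inner_smul_right] at h1y
    have hSty : ⟪y, St y⟫ ≤ (1 - δstar)⁻¹ * ⟪y, S y⟫ := by
      rw [le_inv_mul_iff₀ hδ1]; linarith
    have := hEle y
    have hδ0' : (0:ℝ) ≤ δstar := le_of_lt hδ0
    calc ⟪y, (St - S) y⟫ ≤ δstar * ⟪y, St y⟫ := hEle y
    _ ≤ δstar * ((1 - δstar)⁻¹ * ⟪y, S y⟫) := by
        exact mul_le_mul_of_nonneg_left hSty hδ0'
  
  have t4 : ⟪y, S y⟫ = αstar^2 * ⟪B (Minv g), Sinv (B (Minv g))⟫ := by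
    have hyv : y = -(αstar • Sinv (B (Minv g))) := by
      have : Sinv (S y) = Sinv (-(αstar • B (Minv g))) := by rw [key2]
      rw [hSi] at this
      rw [this]; simp [map_neg, map_smul]
    calc ⟪y, S y⟫ = ⟪-(αstar • Sinv (B (Minv g))), -(αstar • B (Minv g))⟫ := by
          rw [← hyv, ← key2]
    _ = αstar * (αstar * ⟪Sinv (B (Minv g)), B (Minv g)⟫) := by
        rw [inner_neg_neg, real_inner_smul_left, real_inner_smul_right]
    _ = αstar^2 * ⟪B (Minv g), Sinv (B (Minv g))⟫ := by
        rw [real_inner_comm]; ring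
  -- ⟪q, M q⟫ = ⟪B x, Sinv (B x)⟫ for q the M-projection applied to x
  have hBQ : ∀ x : V, B (Minv (LinearMap.adjoint B (Sinv (B x)))) = B x := by
    intro x
    rw [← hSapp, hSi']
  have hQnorm : ∀ x : V,
      ⟪Minv (LinearMap.adjoint B (Sinv (B x))), M (Minv (LinearMap.adjoint B (Sinv (B x))))⟫
        = ⟪B x, Sinv (B x)⟫ := by
    intro x
    rw [hMi', LinearMap.adjoint_inner_right, hBQ, real_inner_comm]
  have t5 : ⟪B (Minv g), Sinv (B (Minv g))⟫ ≤ ⟪g, Minv g⟫ := by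
    set q : V := Minv (LinearMap.adjoint B (Sinv (B (Minv g)))) with hq
    have hq2 : ⟪q, M q⟫ = ⟪B (Minv g), Sinv (B (Minv g))⟫ := hQnorm (Minv g)
    have hq1 : ⟪Minv g, M q⟫ = ⟪B (Minv g), Sinv (B (Minv g))⟫ := by
      rw [hq, hMi', LinearMap.adjoint_inner_right]
    have hq3 : ⟪q, M (Minv g)⟫ = ⟪B (Minv g), Sinv (B (Minv g))⟫ := by
      calc ⟪q, M (Minv g)⟫ = ⟪M q, Minv g⟫ := (hMsym' _ _).symm
      _ = ⟪Minv g, M q⟫ := real_inner_comm _ _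
      _ = _ := hq1
    have hpsd := hMpsd (Minv g - q)
    have hexp : ⟪Minv g - q, M (Minv g - q)⟫
        = ⟪Minv g, M (Minv g)⟫ - ⟪Minv g, M q⟫ - ⟪q, M (Minv g)⟫ + ⟪q, M q⟫ := by
      simp only [map_sub, inner_sub_left, inner_sub_right]
      ring
    have hMg : ⟪Minv g, M (Minv g)⟫ = ⟪g, Minv g⟫ := by
      rw [hMi', real_inner_comm]
    rw [hexp, hMg, hq1, hq2, hq3] at hpsd
    linarith
  -- projection part of the error
  set q0 : V := Minv (LinearMap.adjoint B (Sinv (B uphi))) with hq0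
  set e : V := uphi - ustar with he
  have hq0norm : ⟪q0, M q0⟫ = ⟪B uphi, Sinv (B uphi)⟫ := hQnorm uphi
  have hBd : B (e - q0) = 0 := by
    have h1 : B e = B uphi := by rw [he]; simp [map_sub, hustar]
    have h2 : B q0 = B uphi := hBQ uphi
    rw [map_sub, h1, h2, sub_self]
  have t7 : ⟪g - gs, e⟫ = ⟪g - gs, q0⟫ := by
    have hgsd : ⟪gs, e - q0⟫ = 0 := hopt _ hBd
    have hgd : ⟪g, e - q0⟫ = 0 := by
      have h1 : αstar * ⟪g, e - q0⟫ = 0 := by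
        calc αstar * ⟪g, e - q0⟫ = ⟪αstar • g, e - q0⟫ := (real_inner_smul_left _ _ _).symm
        _ = ⟪-(LinearMap.adjoint B y), e - q0⟫ := by rw [key1]
        _ = -⟪LinearMap.adjoint B y, e - q0⟫ := inner_neg_left _ _
        _ = -⟪y, B (e - q0)⟫ := by rw [LinearMap.adjoint_inner_left]
        _ = 0 := by rw [hBd, inner_zero_right, neg_zero]
      exact (mul_eq_zero.mp h1).resolve_left (ne_of_gt hα0)
    have : ⟪g - gs, e - q0⟫ = 0 := by
      rw [inner_sub_left, hgsd, hgd]; ring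
    rw [inner_sub_right] at this
    linarith
  have t8 : μ * ⟪e, M e⟫ ≤ ⟪g - gs, e⟫ := by
    have h8a := hlow uphi ustar
    have h8b := hlow ustar uphi
    have hne : ustar - uphi = -e := by rw [he]; abel
    rw [hne] at h8b
    have hnn : ⟪-e, M (-e)⟫ = ⟪e, M e⟫ := by rw [map_neg, inner_neg_neg]
    rw [hnn] at h8b
    have hge : ⟪g, -e⟫ = -⟪g, e⟫ := inner_neg_right _ _
    rw [hge] at h8b
    have : ⟪g - gs, e⟫ = ⟪g, e⟫ - ⟪gs, e⟫ := inner_sub_left _ _ _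
    have heq : uphi - ustar = e := rfl
    rw [heq] at h8a
    linarith
  -- smoothness: co-coercivity-type bound
  have smooth : ∀ u v : V, ⟪gradf u - gradf v, Minv (gradf u - gradf v)⟫
      ≤ 2 * L * (f u - f v - ⟪gradf v, u - v⟫) := by
    intro u v
    set d : V := gradf u - gradf v with hd
    set w : V := u - (1/L) • Minv d with hw
    have h1 := hlow w v
    have h2 := hupp w u
    have hwu : w - u = -((1/L) • Minv d) := by rw [hw]; abel
    have hA : ⟪gradf u, w - u⟫ = -((1/L) * ⟪gradf u, Minv d⟫) := by
      rw [hwu, inner_neg_right, real_inner_smul_right]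
    have hB2 : ⟪w - u, M (w - u)⟫ = (1/L)^2 * ⟪d, Minv d⟫ := by
      rw [hwu]
      rw [map_neg, inner_neg_neg, map_smul, real_inner_smul_left, real_inner_smul_right, hMi']
      rw [real_inner_comm]; ring
    have hC : ⟪gradf v, w - v⟫ = ⟪gradf v, u - v⟫ - (1/L) * ⟪gradf v, Minv d⟫ := by
      have hwv : w - v = (u - v) - (1/L) • Minv d := by rw [hw]; abel
      rw [hwv, inner_sub_right, real_inner_smul_right]
    have hpsd0 : 0 ≤ ⟪w - v, M (w - v)⟫ := hMpsd _
    have hdd : ⟪gradf u, Minv d⟫ - ⟪gradf v, Minv d⟫ = ⟪d, Minv d⟫ := by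
      rw [← inner_sub_left]
    have hμ2 : 0 ≤ μ / 2 * ⟪w - v, M (w - v)⟫ :=
      mul_nonneg (by linarith) hpsd0
    -- combine:
    have hcomb : 0 ≤ f u - f v - ⟪gradf v, u - v⟫ - (1/(2*L)) * ⟪d, Minv d⟫ := by
      have e1 : f w - f v - ⟪gradf v, w - v⟫ ≥ 0 := by linarith
      have e2 : f w - f u - ⟪gradf u, w - u⟫ ≤ L/2 * ((1/L)^2 * ⟪d, Minv d⟫) := by
        rw [← hB2]; exact h2
      rw [hA] at e2
      rw [hC] at e1
      have hLL : L/2 * ((1/L)^2 * ⟪d, Minv d⟫) = (1/(2*L)) * ⟪d, Minv d⟫ := by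
        field_simp
      rw [hLL] at e2
      have hLL2 : (1/L) * ⟪gradf u, Minv d⟫ - (1/L) * ⟪gradf v, Minv d⟫
          = (1/L) * ⟪d, Minv d⟫ := by rw [← mul_sub, hdd]
      have hLL3 : (1/L) * ⟪d, Minv d⟫ = 2*((1/(2*L)) * ⟪d, Minv d⟫) := by
        field_simp
      linarith [e1, e2, hLL2, hLL3]
    have h2L : (0:ℝ) < 2 * L := by linarith
    have hmul := mul_le_mul_of_nonneg_left hcomb (le_of_lt h2L)
    have hid : 2*L*((1/(2*L)) * ⟪d, Minv d⟫) = ⟪d, Minv d⟫ := by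
      field_simp
    nlinarith [hmul, hid]
  have t9 : ⟪g - gs, Minv (g - gs)⟫ ≤ L * ⟪g - gs, e⟫ := by
    have h9a := smooth uphi ustar
    have h9b := smooth ustar uphi
    have hne : gradf ustar - gradf uphi = -(g - gs) := by rw [hg, hgs]; abel
    have hne2 : ustar - uphi = -e := by rw [he]; abel
    rw [hne, hne2] at h9b
    have hnn : ⟪-(g - gs), Minv (-(g - gs))⟫ = ⟪g - gs, Minv (g - gs)⟫ := by
      rw [map_neg, inner_neg_neg]
    rw [hnn] at h9b
    have heq : uphi - ustar = e := rfl
    rw [heq] at h9a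
    have hsum : ⟪g, e⟫ - ⟪gs, e⟫ = ⟪g - gs, e⟫ := by rw [← inner_sub_left]
    have ha2 : ⟪g, -e⟫ = -⟪g, e⟫ := inner_neg_right _ _
    rw [ha2] at h9b
    have hX := add_le_add h9a h9b
    have hring : 2*L*(f uphi - f ustar - ⟪gs, e⟫) + 2*L*(f ustar - f uphi - -⟪g, e⟫)
        = 2*L*(⟪g, e⟫ - ⟪gs, e⟫) := by ring
    rw [hring, hsum] at hX
    linarith
  
  have t10 : ⟪g - gs, q0⟫^2 ≤ ⟪g - gs, Minv (g - gs)⟫ * ⟪q0, M q0⟫ := by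
    have hcs := cs_psd M hMsym' hMpsd (Minv (g - gs)) q0
    have r1 : ⟪Minv (g - gs), M q0⟫ = ⟪g - gs, q0⟫ := by
      rw [← hMsym', hMi']
    have r2 : ⟪Minv (g - gs), M (Minv (g - gs))⟫ = ⟪g - gs, Minv (g - gs)⟫ := by
      rw [hMi', real_inner_comm]
    rw [r1, r2] at hcs
    exact hcs
  -- scalar endgame
  have hδ0' : (0:ℝ) ≤ δstar := le_of_lt hδ0
  have hi1 : (0:ℝ) ≤ (1 - δstar)⁻¹ := le_of_lt (inv_pos.mpr hδ1)
  have hG2 : (0:ℝ) ≤ ⟪g, Minv g⟫ := hMipsd g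
  have chainR : ⟪B uphi, Sinv (B uphi)⟫
      ≤ (δstar * (1 - δstar)⁻¹ * αstar)^2 * ⟪g, Minv g⟫ := by
    have s1 : ⟪y, S y⟫ ≤ αstar^2 * ⟪g, Minv g⟫ := by
      rw [t4]
      exact mul_le_mul_of_nonneg_left t5 (sq_nonneg αstar)
    have s2 : ⟪y, (St - S) y⟫ ≤ δstar * ((1-δstar)⁻¹ * (αstar^2 * ⟪g, Minv g⟫)) :=
      le_trans t3 (mul_le_mul_of_nonneg_left (mul_le_mul_of_nonneg_left s1 hi1) hδ0')
    have s3 : ⟪B uphi, Stinv (B uphi)⟫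
        ≤ δstar * (δstar * ((1-δstar)⁻¹ * (αstar^2 * ⟪g, Minv g⟫))) :=
      le_trans t2 (mul_le_mul_of_nonneg_left s2 hδ0')
    calc ⟪B uphi, Sinv (B uphi)⟫
        ≤ (1-δstar)⁻¹ * (δstar * (δstar * ((1-δstar)⁻¹ * (αstar^2 * ⟪g, Minv g⟫)))) :=
          le_trans t1 (mul_le_mul_of_nonneg_left s3 hi1)
    _ = (δstar * (1 - δstar)⁻¹ * αstar)^2 * ⟪g, Minv g⟫ := by ring
  have hR2n : (0:ℝ) ≤ ⟪B uphi, Sinv (B uphi)⟫ := hSipsd _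
  have hP0 : (0:ℝ) ≤ ⟪g - gs, e⟫ :=
    le_trans (mul_nonneg (le_of_lt hμ) (hMpsd e)) t8
  have hPle : ⟪g - gs, e⟫ ≤ L * ⟪B uphi, Sinv (B uphi)⟫ := by
    have hP2 : ⟪g - gs, e⟫^2 ≤ ⟪g - gs, Minv (g - gs)⟫ * ⟪B uphi, Sinv (B uphi)⟫ := by
      rw [t7, ← hq0norm]; exact t10
    rcases eq_or_lt_of_le hP0 with h | h
    · rw [← h]; exact mul_nonneg (le_of_lt hL) hR2n
    · nlinarith [hP2, mul_le_mul_of_nonneg_right t9 hR2n, h]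
  have hD2L : ⟪g - gs, Minv (g - gs)⟫ ≤ L^2 * ⟪B uphi, Sinv (B uphi)⟫ := by
    have := mul_le_mul_of_nonneg_left hPle (le_of_lt hL)
    nlinarith [t9]
  have hE2L : ⟪e, M e⟫ ≤ (L/μ) * ⟪B uphi, Sinv (B uphi)⟫ := by
    have h1 := le_trans t8 hPle
    rw [div_mul_eq_mul_div, le_div_iff₀ hμ]
    linarith only [h1]
  -- pass to square roots
  set N : ℝ := Real.sqrt ⟪gs, Minv gs⟫ with hN
  set G : ℝ := Real.sqrt ⟪g, Minv g⟫ with hG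
  set D : ℝ := Real.sqrt ⟪g - gs, Minv (g - gs)⟫ with hD
  set Em : ℝ := Real.sqrt ⟪e, M e⟫ with hEm
  set R : ℝ := Real.sqrt ⟪B uphi, Sinv (B uphi)⟫ with hRdef
  have hN0 : 0 ≤ N := Real.sqrt_nonneg _
  have hG0 : 0 ≤ G := Real.sqrt_nonneg _
  have hD0 : 0 ≤ D := Real.sqrt_nonneg _
  have hR0 : 0 ≤ R := Real.sqrt_nonneg _
  have hcα0 : 0 ≤ δstar * (1 - δstar)⁻¹ * αstar :=
    mul_nonneg (mul_nonneg hδ0' hi1) (le_of_lt hα0)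
  have hRle : R ≤ δstar * (1 - δstar)⁻¹ * αstar * G := by
    rw [hRdef, hG]
    calc Real.sqrt ⟪B uphi, Sinv (B uphi)⟫
        ≤ Real.sqrt ((δstar * (1 - δstar)⁻¹ * αstar)^2 * ⟪g, Minv g⟫) :=
          Real.sqrt_le_sqrt chainR
    _ = δstar * (1 - δstar)⁻¹ * αstar * Real.sqrt ⟪g, Minv g⟫ := by
        rw [Real.sqrt_mul (sq_nonneg _), Real.sqrt_sq hcα0]
  have hDle : D ≤ L * R := by
    rw [hD, hRdef]
    calc Real.sqrt ⟪g - gs, Minv (g - gs)⟫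
        ≤ Real.sqrt (L^2 * ⟪B uphi, Sinv (B uphi)⟫) := Real.sqrt_le_sqrt hD2L
    _ = L * Real.sqrt ⟪B uphi, Sinv (B uphi)⟫ := by
        rw [Real.sqrt_mul (sq_nonneg _), Real.sqrt_sq (le_of_lt hL)]
  have hEmle : Em ≤ Real.sqrt (L/μ) * R := by
    rw [hEm, hRdef]
    calc Real.sqrt ⟪e, M e⟫
        ≤ Real.sqrt ((L/μ) * ⟪B uphi, Sinv (B uphi)⟫) := Real.sqrt_le_sqrt hE2L
    _ = Real.sqrt (L/μ) * Real.sqrt ⟪B uphi, Sinv (B uphi)⟫ :=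
        Real.sqrt_mul (by positivity) _
  have hGle : G ≤ N + D := by
    have hX2 := cs_psd Minv hMisym hMipsd gs (g - gs)
    have hN2 : 0 ≤ ⟪gs, Minv gs⟫ := hMipsd gs
    have hXle : ⟪gs, Minv (g - gs)⟫ ≤ N * D := by
      calc ⟪gs, Minv (g - gs)⟫ ≤ |⟪gs, Minv (g - gs)⟫| := le_abs_self _
      _ = Real.sqrt (⟪gs, Minv (g - gs)⟫^2) := (Real.sqrt_sq_eq_abs _).symm
      _ ≤ Real.sqrt (⟪gs, Minv gs⟫ * ⟪g - gs, Minv (g - gs)⟫) := Real.sqrt_le_sqrt hX2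
      _ = N * D := by rw [hN, hD, ← Real.sqrt_mul hN2]
    have hcross : ⟪g - gs, Minv gs⟫ = ⟪gs, Minv (g - gs)⟫ := by
      rw [← hMisym, real_inner_comm]
    have hG2exp : ⟪g, Minv g⟫
        = ⟪gs, Minv gs⟫ + 2 * ⟪gs, Minv (g - gs)⟫ + ⟪g - gs, Minv (g - gs)⟫ := by
      have hgd : g = gs + (g - gs) := by abel
      calc ⟪g, Minv g⟫ = ⟪gs + (g - gs), Minv (gs + (g - gs))⟫ := by rw [← hgd]
      _ = ⟪gs, Minv gs⟫ + ⟪gs, Minv (g - gs)⟫ + ⟪g - gs, Minv gs⟫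
            + ⟪g - gs, Minv (g - gs)⟫ := by
          rw [map_add, inner_add_left, inner_add_right, inner_add_right]; ring
      _ = _ := by rw [hcross]; ring
    have hNsq : N^2 = ⟪gs, Minv gs⟫ := Real.sq_sqrt hN2
    have hDsq : D^2 = ⟪g - gs, Minv (g - gs)⟫ := Real.sq_sqrt (hMipsd _)
    have hGsq : ⟪g, Minv g⟫ ≤ (N + D)^2 := by
      have hexp2 : (N + D)^2 = N^2 + 2*(N*D) + D^2 := by ring
      rw [hG2exp, ← hNsq, ← hDsq, hexp2]
      linarith only [hXle]
    calc G = Real.sqrt ⟪g, Minv g⟫ := hG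
    _ ≤ Real.sqrt ((N + D)^2) := Real.sqrt_le_sqrt hGsq
    _ = N + D := Real.sqrt_sq (by linarith)
  -- arithmetic with the constants
  have h43 : (1 - δstar)⁻¹ ≤ 4/3 := by
    rw [inv_le_comm₀ hδ1 (by norm_num)]
    linarith
  have hc13 : δstar * (1 - δstar)⁻¹ ≤ 1/3 :=
    le_trans (mul_le_mul hδ14 h43 hi1 (by norm_num)) (by norm_num)
  have hc43 : δstar * (1 - δstar)⁻¹ ≤ (4/3) * δstar := by
    calc δstar * (1 - δstar)⁻¹ ≤ δstar * (4/3) := mul_le_mul_of_nonneg_left h43 hδ0'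
    _ = (4/3) * δstar := by ring
  have hLα : L * αstar ≤ 1 := by
    calc L * αstar ≤ L * (1/L) := mul_le_mul_of_nonneg_left hαL (le_of_lt hL)
    _ = 1 := by field_simp
  have hDLR : D ≤ L * (δstar * (1 - δstar)⁻¹ * αstar * G) :=
    le_trans hDle (mul_le_mul_of_nonneg_left hRle (le_of_lt hL))
  have hDcG : D ≤ (1/3) * G := by
    have d2 : L * (δstar * (1 - δstar)⁻¹ * αstar * G)
        = (δstar * (1 - δstar)⁻¹) * (L * αstar) * G := by ring
    have d3 : (δstar * (1 - δstar)⁻¹) * (L * αstar) * G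
        ≤ (δstar * (1 - δstar)⁻¹) * 1 * G := by
      apply mul_le_mul_of_nonneg_right _ hG0
      exact mul_le_mul_of_nonneg_left hLα (mul_nonneg hδ0' hi1)
    have d4 : (δstar * (1 - δstar)⁻¹) * 1 * G ≤ (1/3) * G := by
      apply mul_le_mul_of_nonneg_right _ hG0
      linarith
    rw [d2] at hDLR
    linarith only [hDLR, d3, d4]
  have hG32 : G ≤ (3/2) * N := by linarith only [hGle, hDcG]
  have hRN : R ≤ 2 * δstar * αstar * N := by
    have r1 : R ≤ (4/3) * δstar * αstar * G := by
      calc R ≤ δstar * (1 - δstar)⁻¹ * αstar * G := hRle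
      _ ≤ (4/3) * δstar * αstar * G := by
          apply mul_le_mul_of_nonneg_right _ hG0
          exact mul_le_mul_of_nonneg_right hc43 (le_of_lt hα0)
    calc R ≤ (4/3) * δstar * αstar * G := r1
    _ ≤ (4/3) * δstar * αstar * ((3/2) * N) := by
        apply mul_le_mul_of_nonneg_left hG32
        positivity
    _ = 2 * δstar * αstar * N := by ring
  -- square-root bounds for αstar
  have hsqα0 : 0 ≤ Real.sqrt αstar := Real.sqrt_nonneg _
  have hsqL0 : 0 ≤ Real.sqrt L := Real.sqrt_nonneg _
  have hαsq : αstar = Real.sqrt αstar * Real.sqrt αstar :=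
    (Real.mul_self_sqrt (le_of_lt hα0)).symm
  have hsqLa : Real.sqrt L * Real.sqrt αstar ≤ 1 := by
    rw [← Real.sqrt_mul (le_of_lt hL)]
    calc Real.sqrt (L * αstar) ≤ Real.sqrt 1 := Real.sqrt_le_sqrt hLα
    _ = 1 := Real.sqrt_one
  have hLαsq : L * αstar ≤ Real.sqrt L * Real.sqrt αstar := by
    have ha : L * αstar = (Real.sqrt L * Real.sqrt αstar) * (Real.sqrt L * Real.sqrt αstar) := by
      rw [show (Real.sqrt L * Real.sqrt αstar) * (Real.sqrt L * Real.sqrt αstar)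
          = (Real.sqrt L * Real.sqrt L) * (Real.sqrt αstar * Real.sqrt αstar) from by ring,
        Real.mul_self_sqrt (le_of_lt hL), Real.mul_self_sqrt (le_of_lt hα0)]
    rw [ha]
    calc (Real.sqrt L * Real.sqrt αstar) * (Real.sqrt L * Real.sqrt αstar)
        ≤ 1 * (Real.sqrt L * Real.sqrt αstar) :=
          mul_le_mul_of_nonneg_right hsqLa (mul_nonneg hsqL0 hsqα0)
    _ = Real.sqrt L * Real.sqrt αstar := one_mul _
  have hsqαμ : Real.sqrt αstar ≤ (Real.sqrt μ)⁻¹ := by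
    rw [← Real.sqrt_inv]
    apply Real.sqrt_le_sqrt
    have h1 : (1:ℝ)/L ≤ 1/μ := one_div_le_one_div_of_le hμ hμL
    have h2 : (1:ℝ)/μ = μ⁻¹ := one_div μ
    linarith only [hαL, h1, h2]
  -- final goals
  simp only [anorm]
  refine ⟨?_, ?_, ?_⟩
  · -- Em ≤ 3 * sqrt(L/μ) * (sqrt μ)⁻¹ * δ * sqrt α * N
    have hsqκ0 : 0 ≤ Real.sqrt (L/μ) := Real.sqrt_nonneg _
    have e1 : Em ≤ Real.sqrt (L/μ) * (2 * δstar * αstar * N) :=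
      le_trans hEmle (mul_le_mul_of_nonneg_left hRN hsqκ0)
    have e2 : Real.sqrt (L/μ) * (2 * δstar * αstar * N)
        ≤ Real.sqrt (L/μ) * (2 * δstar * ((Real.sqrt μ)⁻¹ * Real.sqrt αstar) * N) := by
      apply mul_le_mul_of_nonneg_left _ hsqκ0
      apply mul_le_mul_of_nonneg_right _ hN0
      apply mul_le_mul_of_nonneg_left _ (by linarith)
      calc αstar = Real.sqrt αstar * Real.sqrt αstar := hαsq
      _ ≤ (Real.sqrt μ)⁻¹ * Real.sqrt αstar :=
          mul_le_mul_of_nonneg_right hsqαμ hsqα0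
    have e3 : Real.sqrt (L/μ) * (2 * δstar * ((Real.sqrt μ)⁻¹ * Real.sqrt αstar) * N)
        ≤ 3 * Real.sqrt (L/μ) * (Real.sqrt μ)⁻¹ * δstar * Real.sqrt αstar * N := by
      have hbase : 0 ≤ Real.sqrt (L/μ) * (Real.sqrt μ)⁻¹ * δstar * Real.sqrt αstar * N := by
        positivity
      calc Real.sqrt (L/μ) * (2 * δstar * ((Real.sqrt μ)⁻¹ * Real.sqrt αstar) * N)
          = 2 * (Real.sqrt (L/μ) * (Real.sqrt μ)⁻¹ * δstar * Real.sqrt αstar * N) := by ring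
      _ ≤ 3 * (Real.sqrt (L/μ) * (Real.sqrt μ)⁻¹ * δstar * Real.sqrt αstar * N) := by
          linarith only [hbase]
      _ = 3 * Real.sqrt (L/μ) * (Real.sqrt μ)⁻¹ * δstar * Real.sqrt αstar * N := by ring
    calc Em ≤ _ := e1
    _ ≤ _ := e2
    _ ≤ _ := e3
  · -- D ≤ 3 * sqrt L * (L/μ) * δ * sqrt α * N
    have dd1 : D ≤ 2 * L * δstar * αstar * N := by
      have := le_trans hDle (mul_le_mul_of_nonneg_left hRN (le_of_lt hL))
      calc D ≤ L * (2 * δstar * αstar * N) := this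
      _ = 2 * L * δstar * αstar * N := by ring
    have dd2 : 2 * L * δstar * αstar * N
        ≤ 2 * (Real.sqrt L * Real.sqrt αstar) * δstar * N := by
      have h5 : L * αstar * (δstar * N) ≤ Real.sqrt L * Real.sqrt αstar * (δstar * N) :=
        mul_le_mul_of_nonneg_right hLαsq (mul_nonneg hδ0' hN0)
      calc 2 * L * δstar * αstar * N = 2 * (L * αstar * (δstar * N)) := by ring
      _ ≤ 2 * (Real.sqrt L * Real.sqrt αstar * (δstar * N)) := by linarith only [h5]
      _ = 2 * (Real.sqrt L * Real.sqrt αstar) * δstar * N := by ring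
    have dd3 : 2 * (Real.sqrt L * Real.sqrt αstar) * δstar * N
        ≤ 3 * Real.sqrt L * (L/μ) * δstar * Real.sqrt αstar * N := by
      have hbase2 : 0 ≤ Real.sqrt L * Real.sqrt αstar * δstar * N := by positivity
      have h6 : (2:ℝ) ≤ 3 * (L/μ) := by linarith only [hκ]
      have h7 := mul_le_mul_of_nonneg_right h6 hbase2
      calc 2 * (Real.sqrt L * Real.sqrt αstar) * δstar * N
          = 2 * (Real.sqrt L * Real.sqrt αstar * δstar * N) := by ring
      _ ≤ 3 * (L/μ) * (Real.sqrt L * Real.sqrt αstar * δstar * N) := by linarith only [h7]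
      _ = 3 * Real.sqrt L * (L/μ) * δstar * Real.sqrt αstar * N := by ring
    calc D ≤ _ := dd1
    _ ≤ _ := dd2
    _ ≤ _ := dd3
  · -- G ≤ 2 * N
    linarith only [hG32, hN0]
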